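/- Let w be a word containing exactly one kink. Then there exists n ∈ ℕ such that f18^n(w) is a left unstable or right unstable word. -/

import Mathlib

open Filter MeasureTheory

/-- The local rule of ECA 18. -/
def rule18 (a b c : Bool) : Bool := (!a && !b && c) || (a && !b && !c)

/-- The local rule of ECA 90. -/
def rule90 (a _b c : Bool) : Bool := xor a c

/-- ECA 18 acting on configurations. -/
def f18C (x : ℤ → Bool) : ℤ → Bool := fun i => rule18 (x (i - 1)) (x i) (x (i + 1))

/-- ECA 90 acting on configurations. -/
def f90C (x : ℤ → Bool) : ℤ → Bool := fun i => rule90 (x (i - 1)) (x i) (x (i + 1))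

/-- Applying a radius-1 local rule to a finite word (shortens it by 2). -/
def mapWord (R : Bool → Bool → Bool → Bool) (w : List Bool) : List Bool :=
  (List.range (w.length - 2)).map fun i =>
    R (w.getD i false) (w.getD (i + 1) false) (w.getD (i + 2) false)

/-- ECA 18 acting on finite words. -/
def f18W : List Bool → List Bool := mapWord rule18

/-- ECA 90 acting on finite words. -/
def f90W : List Bool → List Bool := mapWord rule90

/-- The kink `1 0^(2k) 1`. -/
def kinkWord (k : ℕ) : List Bool := true :: (List.replicate (2 * k) false ++ [true])

/-- A kink occurs in the word `w` at position `i`. -/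
def kinkAtW (w : List Bool) (i : ℕ) : Prop :=
  ∃ k, (w.drop i).take (2 * k + 2) = kinkWord k

/-- The number of kinks in a finite word: the number of positions where a kink occurs. -/
noncomputable def kinkCount (w : List Bool) : ℕ := {i : ℕ | kinkAtW w i}.ncard

/-- A kink occurs in the configuration `x` at position `i`. -/
def kinkAtC (x : ℤ → Bool) (i : ℤ) : Prop :=
  ∃ k, ∀ j : ℕ, j < 2 * k + 2 → x (i + j) = (kinkWord k).getD j false

/-- The configuration `x` contains exactly `m` kinks: the set of positions where a kink
occurs is finite of cardinality `m` (equivalently, `g_x(n)` tends to `m`). -/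
def configKinks (x : ℤ → Bool) (m : ℕ) : Prop :=
  {i : ℤ | kinkAtC x i}.Finite ∧ {i : ℤ | kinkAtC x i}.ncard = m

/-- Left unstable words: the regular language `(ε+0)(10)^* 11 (0+1)^*`. -/
def leftUnstable (w : List Bool) : Prop :=
  ∃ z t : List Bool, ∃ n : ℕ, (z = [] ∨ z = [false]) ∧
    w = z ++ (List.replicate n [true, false]).flatten ++ [true, true] ++ t

/-- Right unstable words: the regular language `(0+1)^* 11 (01)^* (ε+0)`. -/
def rightUnstable (w : List Bool) : Prop :=
  ∃ z s : List Bool, ∃ n : ℕ, (z = [] ∨ z = [false]) ∧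
    w = s ++ [true, true] ++ (List.replicate n [false, true]).flatten ++ z

/-- Stable words: those that are neither left nor right unstable. -/
def stable (w : List Bool) : Prop := ¬ (leftUnstable w ∨ rightUnstable w)

/-- The finite extension `Σ(w)`: words `a ++ w ++ b` with the same number of kinks as `w`. -/
def extW (w : List Bool) : Set (List Bool) :=
  {u | (∃ a b : List Bool, u = a ++ w ++ b) ∧ kinkCount u = kinkCount w}

/-- The extension `Σ̃(w, p)`: configurations containing `w` at position `p`,
with the same number of kinks as `w`. -/
def extC (w : List Bool) (p : ℤ) : Set (ℤ → Bool) :=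
  {x | (∀ j : ℕ, j < w.length → x (p + j) = w.getD j false) ∧ configKinks x (kinkCount w)}

/-- The cylinder set `[w]_i`. -/
def cyl (w : List Bool) (i : ℤ) : Set (ℤ → Bool) :=
  {x | ∀ j : ℕ, j < w.length → x (i + j) = w.getD j false}


/-! ### Auxiliary development -/

section Aux

lemma ext_getD {l l' : List Bool} (h : l.length = l'.length)
    (hg : ∀ j, j < l.length → l.getD j false = l'.getD j false) : l = l' := by
  apply List.ext_getElem h
  intro j h1 h2
  rw [← List.getD_eq_getElem l false h1, ← List.getD_eq_getElem l' false h2]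
  exact hg j h1

lemma kinkWord_length (k : ℕ) : (kinkWord k).length = 2 * k + 2 := by
  simp [kinkWord]

lemma kinkWord_getD (k j : ℕ) (hj : j < 2 * k + 2) :
    (kinkWord k).getD j false = if j = 0 ∨ j = 2 * k + 1 then true else false := by
  unfold kinkWord
  rcases Nat.eq_zero_or_pos j with rfl | hpos
  · simp
  · obtain ⟨j', rfl⟩ : ∃ j', j = j' + 1 := ⟨j - 1, by omega⟩
    rw [List.getD_cons_succ]
    rcases lt_or_ge j' (2 * k) with h | h
    · rw [List.getD_append (List.replicate (2*k) false) [true] false j' (by simp only [List.length_replicate]; exact h)]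
      rw [List.getD_eq_getElem (List.replicate (2*k) false) false (by simp only [List.length_replicate]; exact h)]
      simp
      omega
    · have hj' : j' = 2 * k := by omega
      subst hj'
      rw [List.getD_append_right (List.replicate (2*k) false) [true] false (2*k) (by simp)]
      simp

/-- Pointwise characterization of a kink occurrence. -/
lemma kinkAt_iff (w : List Bool) (i : ℕ) :
    kinkAtW w i ↔ ∃ k : ℕ, i + 2 * k + 2 ≤ w.length ∧ w.getD i false = true ∧
      w.getD (i + (2 * k + 1)) false = true ∧
      ∀ j : ℕ, 0 < j → j < 2 * k + 1 → w.getD (i + j) false = false := by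
  constructor
  · rintro ⟨k, hk⟩
    have hlen : ((w.drop i).take (2 * k + 2)).length = 2 * k + 2 := by
      rw [hk, kinkWord_length]
    have hlen' : i + 2 * k + 2 ≤ w.length := by
      rw [List.length_take, List.length_drop] at hlen; omega
    have hget : ∀ j, j < 2 * k + 2 → w.getD (i + j) false = (kinkWord k).getD j false := by
      intro j hj
      rw [← hk]
      have h1 : j < ((w.drop i).take (2 * k + 2)).length := by rw [hlen]; exact hj
      rw [List.getD_eq_getElem _ false h1, List.getD_eq_getElem _ false (by omega)]
      rw [List.getElem_take, List.getElem_drop]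
    refine ⟨k, hlen', ?_, ?_, ?_⟩
    · have := hget 0 (by omega); rw [kinkWord_getD k 0 (by omega)] at this; simpa using this
    · have := hget (2 * k + 1) (by omega); rw [kinkWord_getD k _ (by omega)] at this
      simpa using this
    · intro j h0 h1
      have := hget j (by omega); rw [kinkWord_getD k _ (by omega)] at this
      rw [this]; simp; omega
  · rintro ⟨k, hle, h0, h1, hmid⟩
    refine ⟨k, ?_⟩
    apply ext_getD
    · rw [List.length_take, List.length_drop, kinkWord_length]; omega
    · intro j hj
      have hj' : j < 2 * k + 2 := by
        rw [List.length_take, List.length_drop] at hj; omega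
      have h1' : j < ((w.drop i).take (2 * k + 2)).length := by
        rw [List.length_take, List.length_drop]; omega
      rw [List.getD_eq_getElem _ false h1', List.getElem_take, List.getElem_drop,
        ← List.getD_eq_getElem w false (by omega), kinkWord_getD k j hj']
      rcases Nat.eq_zero_or_pos j with rfl | hpos
      · simpa using h0
      · rcases eq_or_ne j (2 * k + 1) with rfl | hne
        · simpa using h1
        · rw [hmid j hpos (by omega)]; simp; omega

end Aux


section Aux2

/-- The set of kink positions. -/
def kset (w : List Bool) : Set ℕ := {i | kinkAtW w i}

lemma kinkCount_def (w : List Bool) : kinkCount w = (kset w).ncard := rfl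

lemma kset_subset (w : List Bool) : kset w ⊆ Set.Iio w.length := by
  intro i hi
  rw [Set.mem_Iio]
  obtain ⟨k, hle, -⟩ := (kinkAt_iff w i).1 hi
  omega

lemma kset_finite (w : List Bool) : (kset w).Finite :=
  (Set.finite_Iio w.length).subset (kset_subset w)

lemma getD_concat (u : List Bool) (x : Bool) (j : ℕ) :
    (u ++ [x]).getD j false =
      if j < u.length then u.getD j false else if j = u.length then x else false := by
  rcases lt_or_ge j u.length with h | h
  · rw [List.getD_append u [x] false j h]; simp [h]
  · rcases eq_or_ne j u.length with rfl | hne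
    · rw [List.getD_append_right u [x] false u.length h]
      simp
    · rw [List.getD_eq_default (u ++ [x]) false (by simp only [List.length_append, List.length_singleton]; omega)]
      rw [if_neg (by omega), if_neg hne]

/-- Appending `false` does not change the kink set. -/
lemma kset_concat_false (u : List Bool) : kset (u ++ [false]) = kset u := by
  ext i
  simp only [kset, Set.mem_setOf_eq, kinkAt_iff]
  constructor
  · rintro ⟨k, hle, h0, h1, hmid⟩
    simp only [List.length_append, List.length_singleton] at hle
    have hlast : i + 2 * k + 2 ≤ u.length := by
      by_contra hcon
      have he : i + (2 * k + 1) = u.length := by omega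
      rw [getD_concat, if_neg (by omega), if_pos he] at h1
      exact Bool.false_ne_true h1
    refine ⟨k, hlast, ?_, ?_, ?_⟩
    · rw [getD_concat, if_pos (by omega)] at h0; exact h0
    · rw [getD_concat, if_pos (by omega)] at h1; exact h1
    · intro j hj1 hj2
      have := hmid j hj1 hj2
      rw [getD_concat, if_pos (by omega)] at this; exact this
  · rintro ⟨k, hle, h0, h1, hmid⟩
    refine ⟨k, by simp; omega, ?_, ?_, ?_⟩
    · rw [getD_concat, if_pos (by omega)]; exact h0
    · rw [getD_concat, if_pos (by omega)]; exact h1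
    · intro j hj1 hj2
      rw [getD_concat, if_pos (by omega)]; exact hmid j hj1 hj2

lemma kset_concat_true_of_not_mem (u : List Bool) (hu : true ∉ u) :
    kset (u ++ [true]) = ∅ := by
  ext i
  simp only [kset, Set.mem_setOf_eq, Set.mem_empty_iff_false, iff_false, kinkAt_iff]
  rintro ⟨k, hle, h0, h1, hmid⟩
  simp only [List.length_append, List.length_singleton] at hle
  have hi : i < u.length := by omega
  rw [getD_concat, if_pos hi] at h0
  have hmem : u[i] = true := by rw [← List.getD_eq_getElem u false hi]; exact h0
  exact hu (hmem ▸ List.getElem_mem hi)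

lemma kset_of_not_mem (u : List Bool) (hu : true ∉ u) : kset u = ∅ := by
  ext i
  simp only [kset, Set.mem_setOf_eq, Set.mem_empty_iff_false, iff_false, kinkAt_iff]
  rintro ⟨k, hle, h0, h1, hmid⟩
  have hi : i < u.length := by omega
  have hmem : u[i] = true := by rw [← List.getD_eq_getElem u false hi]; exact h0
  exact hu (hmem ▸ List.getElem_mem hi)

end Aux2

section Aux3

/-- Number of trailing `false`s. -/
def trailB (u : List Bool) : ℕ := (u.reverse.takeWhile (fun b => b == false)).length

/-- Parity of the number of trailing `false`s (`none` if no `true` occurs). -/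
def parOpt (u : List Bool) : Option Bool :=
  if true ∈ u then some (decide (trailB u % 2 = 0)) else none

/-- Abstract one-symbol update of the kink-tracking state. -/
def kstep : Option Bool × ℕ → Bool → Option Bool × ℕ
  | (p, c), true => (some true, if p = some true then min 2 (c + 1) else c)
  | (p, c), false => (p.map (fun b => !b), c)

/-- Reference kink-tracking state of a word. -/
noncomputable def kref (u : List Bool) : Option Bool × ℕ := (parOpt u, min 2 (kinkCount u))

lemma trailB_concat_true (u : List Bool) : trailB (u ++ [true]) = 0 := by
  simp [trailB, List.takeWhile]

lemma trailB_concat_false (u : List Bool) : trailB (u ++ [false]) = trailB u + 1 := by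
  simp [trailB, List.takeWhile]

lemma exists_decomp (u : List Bool) (hu : true ∈ u) :
    ∃ v : List Bool, u = v ++ true :: List.replicate (trailB u) false := by
  induction u using List.reverseRecOn with
  | nil => simp at hu
  | append_singleton u x ih =>
    cases x
    · have hu' : true ∈ u := by simpa using hu
      obtain ⟨v, hv⟩ := ih hu'
      refine ⟨v, ?_⟩
      rw [trailB_concat_false, List.replicate_succ']
      conv_lhs => rw [hv]
      simp
    · exact ⟨u, by simp [trailB_concat_true]⟩

lemma decomp_getD_last (v : List Bool) (t : ℕ) :
    (v ++ true :: List.replicate t false).getD v.length false = true := by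
  rw [List.getD_append_right v _ false v.length le_rfl]
  simp

lemma decomp_getD_after (v : List Bool) (t : ℕ) (j : ℕ) (hj : v.length < j) :
    (v ++ true :: List.replicate t false).getD j false = false := by
  rcases lt_or_ge j (v ++ true :: List.replicate t false).length with h | h
  · rw [List.getD_append_right v _ false j (le_of_lt hj)]
    obtain ⟨j', hj'⟩ : ∃ j', j - v.length = j' + 1 := ⟨j - v.length - 1, by omega⟩
    rw [hj', List.getD_cons_succ]
    simp only [List.length_append, List.length_cons, List.length_replicate] at h
    rw [List.getD_eq_getElem (List.replicate t false) false (by simp; omega)]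
    simp
  · exact List.getD_eq_default _ false h

lemma decomp_length (v : List Bool) (t : ℕ) :
    (v ++ true :: List.replicate t false).length = v.length + t + 1 := by
  simp; omega

/-- Appending `true` to a word ending in an even number of `false`s after a `true`
creates exactly one new kink, at the position of the last `true`. -/
lemma kset_concat_true_even (v : List Bool) (t : ℕ) (ht : t % 2 = 0) :
    kset ((v ++ true :: List.replicate t false) ++ [true]) =
      insert v.length (kset (v ++ true :: List.replicate t false)) := by
  set u := v ++ true :: List.replicate t false with hu
  have hulen : u.length = v.length + t + 1 := decomp_length v t
  ext i
  simp only [kset, Set.mem_setOf_eq, Set.mem_insert_iff, kinkAt_iff]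
  constructor
  · rintro ⟨k, hle, h0, h1, hmid⟩
    simp only [List.length_append, List.length_singleton] at hle
    rcases lt_or_ge (i + 2 * k + 2) (u.length + 1) with hin | hout
    · -- kink entirely inside u
      right
      refine ⟨k, by omega, ?_, ?_, ?_⟩
      · rw [getD_concat, if_pos (by omega)] at h0; exact h0
      · rw [getD_concat, if_pos (by omega)] at h1; exact h1
      · intro j hj1 hj2
        have := hmid j hj1 hj2
        rw [getD_concat, if_pos (by omega)] at this; exact this
    · -- kink ends at the appended true
      left
      have hend : i + 2 * k + 1 = u.length := by omega
      rw [getD_concat, if_pos (by omega)] at h0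
      -- show i = v.length
      rcases lt_trichotomy i v.length with hlt | heq | hgt
      · exfalso
        have hj : 0 < v.length - i ∧ v.length - i < 2 * k + 1 := by omega
        have := hmid (v.length - i) hj.1 hj.2
        rw [getD_concat, if_pos (by omega)] at this
        have h2 : i + (v.length - i) = v.length := by omega
        rw [h2, decomp_getD_last] at this
        simp at this
      · exact heq
      · exfalso
        rw [decomp_getD_after v t i hgt] at h0
        exact Bool.false_ne_true h0
  · rintro (rfl | ⟨k, hle, h0, h1, hmid⟩)
    · -- the new kink
      refine ⟨t / 2, ?_, ?_, ?_, ?_⟩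
      · simp only [List.length_append, List.length_singleton]; omega
      · rw [getD_concat, if_pos (by omega)]
        exact decomp_getD_last v t
      · rw [getD_concat, if_neg (by omega), if_pos (by omega)]
      · intro j hj1 hj2
        rw [getD_concat, if_pos (by omega)]
        exact decomp_getD_after v t _ (by omega)
    · refine ⟨k, by simp only [List.length_append, List.length_singleton]; omega, ?_, ?_, ?_⟩
      · rw [getD_concat, if_pos (by omega)]; exact h0
      · rw [getD_concat, if_pos (by omega)]; exact h1
      · intro j hj1 hj2
        rw [getD_concat, if_pos (by omega)]; exact hmid j hj1 hj2

lemma not_kinkAt_last (v : List Bool) (t : ℕ) :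
    v.length ∉ kset (v ++ true :: List.replicate t false) := by
  intro hmem
  obtain ⟨k, hle, h0, h1, hmid⟩ := (kinkAt_iff _ _).1 hmem
  rw [decomp_getD_after v t _ (by omega)] at h1
  exact Bool.false_ne_true h1

/-- Appending `true` after an odd number of trailing `false`s creates no kink. -/
lemma kset_concat_true_odd (v : List Bool) (t : ℕ) (ht : t % 2 = 1) :
    kset ((v ++ true :: List.replicate t false) ++ [true]) =
      kset (v ++ true :: List.replicate t false) := by
  set u := v ++ true :: List.replicate t false with hu
  have hulen : u.length = v.length + t + 1 := decomp_length v t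
  ext i
  simp only [kset, Set.mem_setOf_eq, kinkAt_iff]
  constructor
  · rintro ⟨k, hle, h0, h1, hmid⟩
    simp only [List.length_append, List.length_singleton] at hle
    rcases lt_or_ge (i + 2 * k + 2) (u.length + 1) with hin | hout
    · refine ⟨k, by omega, ?_, ?_, ?_⟩
      · rw [getD_concat, if_pos (by omega)] at h0; exact h0
      · rw [getD_concat, if_pos (by omega)] at h1; exact h1
      · intro j hj1 hj2
        have := hmid j hj1 hj2
        rw [getD_concat, if_pos (by omega)] at this; exact this
    · exfalso
      have hend : i + 2 * k + 1 = u.length := by omega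
      rw [getD_concat, if_pos (by omega)] at h0
      rcases lt_trichotomy i v.length with hlt | heq | hgt
      · have hj : 0 < v.length - i ∧ v.length - i < 2 * k + 1 := by omega
        have := hmid (v.length - i) hj.1 hj.2
        rw [getD_concat, if_pos (by omega)] at this
        have h2 : i + (v.length - i) = v.length := by omega
        rw [h2, decomp_getD_last] at this
        simp at this
      · omega
      · rw [decomp_getD_after v t i hgt] at h0
        exact Bool.false_ne_true h0
  · rintro ⟨k, hle, h0, h1, hmid⟩
    refine ⟨k, by simp only [List.length_append, List.length_singleton]; omega, ?_, ?_, ?_⟩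
    · rw [getD_concat, if_pos (by omega)]; exact h0
    · rw [getD_concat, if_pos (by omega)]; exact h1
    · intro j hj1 hj2
      rw [getD_concat, if_pos (by omega)]; exact hmid j hj1 hj2

end Aux3

section Aux4

lemma kinkCount_concat_false (u : List Bool) : kinkCount (u ++ [false]) = kinkCount u := by
  rw [kinkCount_def, kinkCount_def, kset_concat_false]

lemma kinkCount_concat_true_even (v : List Bool) (t : ℕ) (ht : t % 2 = 0) :
    kinkCount ((v ++ true :: List.replicate t false) ++ [true])
      = kinkCount (v ++ true :: List.replicate t false) + 1 := by
  rw [kinkCount_def, kinkCount_def, kset_concat_true_even v t ht,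
    Set.ncard_insert_of_notMem (not_kinkAt_last v t) (kset_finite _)]

lemma kinkCount_concat_true_odd (v : List Bool) (t : ℕ) (ht : t % 2 = 1) :
    kinkCount ((v ++ true :: List.replicate t false) ++ [true])
      = kinkCount (v ++ true :: List.replicate t false) := by
  rw [kinkCount_def, kinkCount_def, kset_concat_true_odd v t ht]

lemma kinkCount_of_not_mem (u : List Bool) (hu : true ∉ u) : kinkCount u = 0 := by
  rw [kinkCount_def, kset_of_not_mem u hu, Set.ncard_empty]

lemma kinkCount_concat_true_of_not_mem (u : List Bool) (hu : true ∉ u) :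
    kinkCount (u ++ [true]) = 0 := by
  rw [kinkCount_def, kset_concat_true_of_not_mem u hu, Set.ncard_empty]

/-- The key update lemma for the kink-tracking state. -/
lemma kref_concat (u : List Bool) (x : Bool) : kref (u ++ [x]) = kstep (kref u) x := by
  cases x
  · -- appending false
    show (parOpt (u ++ [false]), min 2 (kinkCount (u ++ [false])))
      = ((parOpt u).map (fun b => !b), min 2 (kinkCount u))
    rw [kinkCount_concat_false]
    by_cases hm : true ∈ u
    · have hm' : true ∈ u ++ [false] := by simp [hm]
      simp only [parOpt, if_pos hm, if_pos hm', trailB_concat_false, Option.map_some]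
      rcases Nat.mod_two_eq_zero_or_one (trailB u) with h | h <;>
        simp [Nat.add_mod, h]
    · have hm' : true ∉ u ++ [false] := by simp [hm]
      simp [parOpt, hm, hm']
  · -- appending true
    have hmem : true ∈ u ++ [true] := by simp
    by_cases hm : true ∈ u
    · obtain ⟨v, hv⟩ := exists_decomp u hm
      rcases Nat.mod_two_eq_zero_or_one (trailB u) with ht | ht
      · -- even trailing zeros: a new kink appears
        have hpar : parOpt u = some true := by simp [parOpt, hm, ht]
        have hcnt : kinkCount (u ++ [true]) = kinkCount u + 1 := by
          conv_lhs => rw [hv]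
          conv_rhs => rw [hv]
          exact kinkCount_concat_true_even v (trailB u) ht
        show (parOpt (u ++ [true]), min 2 (kinkCount (u ++ [true])))
          = (some true, if parOpt u = some true then min 2 (min 2 (kinkCount u) + 1)
              else min 2 (kinkCount u))
        rw [hpar, if_pos rfl, hcnt]
        refine Prod.ext ?_ ?_
        · simp [parOpt, hmem, trailB_concat_true]
        · simp only []
          omega
      · -- odd trailing zeros: no new kink
        have hpar : parOpt u = some false := by simp [parOpt, hm, ht]
        have hcnt : kinkCount (u ++ [true]) = kinkCount u := by
          conv_lhs => rw [hv]
          conv_rhs => rw [hv]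
          exact kinkCount_concat_true_odd v (trailB u) ht
        show (parOpt (u ++ [true]), min 2 (kinkCount (u ++ [true])))
          = (some true, if parOpt u = some true then min 2 (min 2 (kinkCount u) + 1)
              else min 2 (kinkCount u))
        rw [hpar, if_neg (by simp), hcnt]
        simp [parOpt, hmem, trailB_concat_true]
    · have hpar : parOpt u = none := by simp [parOpt, hm]
      have hc0 : kinkCount u = 0 := kinkCount_of_not_mem u hm
      have hc1 : kinkCount (u ++ [true]) = 0 := kinkCount_concat_true_of_not_mem u hm
      show (parOpt (u ++ [true]), min 2 (kinkCount (u ++ [true])))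
        = (some true, if parOpt u = some true then min 2 (min 2 (kinkCount u) + 1)
            else min 2 (kinkCount u))
      rw [hpar, if_neg (by simp), hc0, hc1]
      simp [parOpt, hmem, trailB_concat_true]

end Aux4

section Aux5

lemma f18W_length (w : List Bool) : (f18W w).length = w.length - 2 := by
  simp [f18W, mapWord]

lemma f18W_short (w : List Bool) (h : w.length ≤ 2) : f18W w = [] := by
  have : w.length - 2 = 0 := by omega
  simp [f18W, mapWord, this]

lemma f18W_concat (w : List Bool) (x : Bool) (h : 2 ≤ w.length) :
    f18W (w ++ [x]) = f18W w ++
      [rule18 (w.getD (w.length - 2) false) (w.getD (w.length - 1) false) x] := by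
  unfold f18W mapWord
  have hl : (w ++ [x]).length - 2 = (w.length - 2) + 1 := by simp; omega
  rw [hl, List.range_succ, List.map_append]
  congr 1
  · apply List.map_congr_left
    intro i hi
    rw [List.mem_range] at hi
    rw [getD_concat, if_pos (by omega), getD_concat, if_pos (by omega),
      getD_concat, if_pos (by omega)]
  · simp only [List.map_cons, List.map_nil, List.cons.injEq, and_true]
    rw [getD_concat, if_pos (by omega), getD_concat, if_pos (by omega),
      getD_concat, if_neg (by omega), if_pos (by omega)]
    congr 2
    omega

/-- States for tracking the left-unstable prefix language. -/
inductive LU | S | E | P1 | ACC | D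
deriving DecidableEq

/-- States for tracking the right-unstable suffix language. -/
inductive RU | N | A | B
deriving DecidableEq

def lustep : LU → Bool → LU
  | .S, false => .E
  | .S, true => .P1
  | .E, false => .D
  | .E, true => .P1
  | .P1, false => .E
  | .P1, true => .ACC
  | .ACC, _ => .ACC
  | .D, _ => .D

def rustep (r : RU) (last : Option Bool) (x : Bool) : RU :=
  if x then (if r = .B ∨ last = some true then .A else .N)
  else (if r = .A then .B else .N)

/-- The combined automaton state. -/
structure St where
  w0 : Option Bool
  w1 : Option Bool
  wk : Option Bool × ℕ
  ik : Option Bool × ℕ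
  lu : LU
  ru : RU
deriving DecidableEq

def stepSt (s : St) (x : Bool) : St :=
  { w0 := s.w1
    w1 := some x
    wk := kstep s.wk x
    ik := match s.w0, s.w1 with
          | some a, some b => kstep s.ik (rule18 a b x)
          | _, _ => s.ik
    lu := lustep s.lu x
    ru := rustep s.ru s.w1 x }

def initSt : St := ⟨none, none, (none, 0), (none, 0), .S, .N⟩

def scanSt (w : List Bool) : St := w.foldl stepSt initSt

lemma scanSt_concat (w : List Bool) (x : Bool) :
    scanSt (w ++ [x]) = stepSt (scanSt w) x := by
  simp [scanSt, List.foldl_append]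

/-- The semantic meaning of the automaton state. -/
def OK (w : List Bool) (s : St) : Prop :=
  (s.w0 = if 2 ≤ w.length then some (w.getD (w.length - 2) false) else none) ∧
  (s.w1 = if 1 ≤ w.length then some (w.getD (w.length - 1) false) else none) ∧
  s.wk = kref w ∧
  s.ik = kref (f18W w) ∧
  (s.lu = .S → w = []) ∧
  (s.lu = .E → ∃ z : List Bool, ∃ n : ℕ, (z = [] ∨ z = [false]) ∧
    w = z ++ (List.replicate n [true, false]).flatten) ∧
  (s.lu = .P1 → ∃ z : List Bool, ∃ n : ℕ, (z = [] ∨ z = [false]) ∧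
    w = z ++ (List.replicate n [true, false]).flatten ++ [true]) ∧
  (s.lu = .ACC → leftUnstable w) ∧
  (s.ru = .A → ∃ s' : List Bool, ∃ n : ℕ,
    w = s' ++ [true, true] ++ (List.replicate n [false, true]).flatten) ∧
  (s.ru = .B → ∃ s' : List Bool, ∃ n : ℕ,
    w = s' ++ [true, true] ++ (List.replicate n [false, true]).flatten ++ [false])

lemma OK_init : OK [] initSt := by
  refine ⟨by simp [initSt], by simp [initSt], ?_, ?_, by simp, ?_, ?_, ?_, ?_, ?_⟩
  · simp [initSt, kref, parOpt, kinkCount_of_not_mem [] (by simp)]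
  · simp [initSt, f18W, mapWord, kref, parOpt, kinkCount_of_not_mem ([] : List Bool) (by simp)]
  · intro h; exact ⟨[], 0, Or.inl rfl, by simp⟩
  · intro h; simp [initSt] at h
  · intro h; simp [initSt] at h
  · intro h; simp [initSt] at h
  · intro h; simp [initSt] at h

end Aux5

section Aux6

lemma fl_succ_tf (n : ℕ) : (List.replicate (n+1) [true, false]).flatten
    = (List.replicate n [true, false]).flatten ++ [true, false] := by
  rw [List.replicate_succ', List.flatten_append]; simp

lemma fl_succ_ft (n : ℕ) : (List.replicate (n+1) [false, true]).flatten
    = (List.replicate n [false, true]).flatten ++ [false, true] := by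
  rw [List.replicate_succ', List.flatten_append]; simp

lemma OK_step (w : List Bool) (s : St) (h : OK w s) (x : Bool) :
    OK (w ++ [x]) (stepSt s x) := by
  obtain ⟨h0, h1, hwk, hik, hS, hE, hP1, hACC, hA, hB⟩ := h
  refine ⟨?_, ?_, ?_, ?_, ?_, ?_, ?_, ?_, ?_, ?_⟩
  · -- w0
    show s.w1 = _
    rw [h1]
    by_cases hn : 1 ≤ w.length
    · rw [if_pos hn, if_pos (by simp only [List.length_append, List.length_singleton]; omega)]
      rw [List.length_append, List.length_singleton, getD_concat, if_pos (by omega)]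
      congr 2
    · rw [if_neg hn, if_neg (by simp only [List.length_append, List.length_singleton]; omega)]
  · -- w1
    show some x = _
    rw [if_pos (by simp only [List.length_append, List.length_singleton]; omega)]
    rw [List.length_append, List.length_singleton, getD_concat,
      if_neg (by omega), if_pos (by omega)]
  · -- wk
    show kstep s.wk x = _
    rw [hwk, kref_concat]
  · -- ik
    show (match s.w0, s.w1 with
          | some a, some b => kstep s.ik (rule18 a b x)
          | _, _ => s.ik) = kref (f18W (w ++ [x]))
    by_cases hn : 2 ≤ w.length
    · rw [h0, h1, if_pos hn, if_pos (by omega)]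
      show kstep s.ik (rule18 _ _ x) = _
      rw [hik, f18W_concat w x hn, kref_concat]
    · rw [h0, if_neg hn]
      have e1 : f18W w = [] := f18W_short w (by omega)
      have e2 : f18W (w ++ [x]) = [] := f18W_short _ (by
        simp only [List.length_append, List.length_singleton]; omega)
      by_cases hn1 : 1 ≤ w.length
      · rw [h1, if_pos hn1]
        show s.ik = _
        rw [hik, e1, e2]
      · rw [h1, if_neg hn1]
        show s.ik = _
        rw [hik, e1, e2]
  · -- lu = S
    show lustep s.lu x = .S → _
    intro hh
    cases hlu : s.lu <;> rw [hlu] at hh <;> cases x <;> simp [lustep] at hh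
  · -- lu = E
    show lustep s.lu x = .E → _
    intro hh
    cases hlu : s.lu <;> rw [hlu] at hh <;> cases x <;> simp [lustep] at hh
    · -- S, false
      rw [hS hlu]
      exact ⟨[false], 0, Or.inr rfl, by simp⟩
    · -- P1, false
      obtain ⟨z, n, hz, hw⟩ := hP1 hlu
      refine ⟨z, n + 1, hz, ?_⟩
      rw [hw, fl_succ_tf]
      simp
  · -- lu = P1
    show lustep s.lu x = .P1 → _
    intro hh
    cases hlu : s.lu <;> rw [hlu] at hh <;> cases x <;> simp [lustep] at hh
    · -- S, true
      rw [hS hlu]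
      exact ⟨[], 0, Or.inl rfl, by simp⟩
    · -- E, true
      obtain ⟨z, n, hz, hw⟩ := hE hlu
      exact ⟨z, n, hz, by rw [hw]⟩
  · -- lu = ACC
    show lustep s.lu x = .ACC → _
    intro hh
    cases hlu : s.lu <;> rw [hlu] at hh <;> cases x <;> simp [lustep] at hh
    · -- P1, true
      obtain ⟨z, n, hz, hw⟩ := hP1 hlu
      refine ⟨z, [], n, hz, ?_⟩
      rw [hw]
      simp
    · -- ACC, false
      obtain ⟨z, t, n, hz, hw⟩ := hACC hlu
      exact ⟨z, t ++ [false], n, hz, by rw [hw]; simp⟩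
    · -- ACC, true
      obtain ⟨z, t, n, hz, hw⟩ := hACC hlu
      exact ⟨z, t ++ [true], n, hz, by rw [hw]; simp⟩
  · -- ru = A
    show rustep s.ru s.w1 x = .A → _
    intro hh
    cases x
    · rcases em (s.ru = RU.A) with hr | hr <;> simp [rustep, hr] at hh
    · rcases em (s.ru = RU.B ∨ s.w1 = some true) with hr | hr
      · rcases hr with hr | hr
        · obtain ⟨s', n, hw⟩ := hB hr
          refine ⟨s', n + 1, ?_⟩
          rw [hw, fl_succ_ft]
          simp
        · -- w ends with true
          have hn1 : 1 ≤ w.length := by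
            by_contra hcon
            rw [h1, if_neg hcon] at hr
            cases hr
          have hlast : w.getD (w.length - 1) false = true := by
            rw [h1, if_pos hn1] at hr
            exact Option.some_injective _ hr
          have hne : w ≠ [] := by
            intro hcon; rw [hcon] at hn1; simp at hn1
          have hw : w = w.dropLast ++ [true] := by
            conv_lhs => rw [← List.dropLast_append_getLast hne]
            congr 2
            rw [List.getLast_eq_getElem, ← List.getD_eq_getElem w false (by omega)]
            exact hlast
          refine ⟨w.dropLast, 0, ?_⟩
          conv_lhs => rw [hw]
          simp
      · simp [rustep, hr] at hh
  · -- ru = B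
    show rustep s.ru s.w1 x = .B → _
    intro hh
    cases x
    · rcases em (s.ru = RU.A) with hr | hr
      · obtain ⟨s', n, hw⟩ := hA hr
        exact ⟨s', n, by rw [hw]⟩
      · simp [rustep, hr] at hh
    · rcases em (s.ru = RU.B ∨ s.w1 = some true) with hr | hr <;> simp [rustep, hr] at hh

end Aux6

section Aux7

lemma OK_scan (w : List Bool) : OK w (scanSt w) := by
  induction w using List.reverseRecOn with
  | nil => exact OK_init
  | append_singleton w x ih =>
    rw [scanSt_concat]
    exact OK_step w (scanSt w) ih x

def GOOD0 : List St := [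
  .mk (some false) (some false) (some false, 0) (some false, 0) .D .N,
  .mk (some false) (some false) (some false, 1) (some false, 0) .ACC .N,
  .mk (some false) (some false) (some false, 1) (some false, 1) .D .N,
  .mk (some false) (some false) (some false, 2) (some false, 0) .ACC .N,
  .mk (some false) (some false) (some false, 2) (some false, 0) .D .N,
  .mk (some false) (some false) (some false, 2) (some false, 1) .ACC .N,
  .mk (some false) (some false) (some false, 2) (some false, 1) .D .N,
  .mk (some false) (some false) (some false, 2) (some false, 2) .ACC .N,
  .mk (some false) (some false) (some false, 2) (some false, 2) .D .N,
  .mk (some false) (some false) (some true, 0) (some true, 0) .D .N,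
  .mk (some false) (some false) (some true, 1) (some true, 0) .ACC .N,
  .mk (some false) (some false) (some true, 1) (some true, 1) .D .N,
  .mk (some false) (some false) (some true, 2) (some true, 0) .ACC .N,
  .mk (some false) (some false) (some true, 2) (some true, 0) .D .N,
  .mk (some false) (some false) (some true, 2) (some true, 1) .ACC .N
]

def GOOD1 : List St := [
  .mk (some false) (some false) (some true, 2) (some true, 1) .D .N,
  .mk (some false) (some false) (some true, 2) (some true, 2) .ACC .N,
  .mk (some false) (some false) (some true, 2) (some true, 2) .D .N,
  .mk (some false) (some false) (none, 0) (none, 0) .D .N,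
  .mk (some false) (some true) (some true, 0) (some true, 0) .D .N,
  .mk (some false) (some true) (some true, 0) (none, 0) .P1 .N,
  .mk (some false) (some true) (some true, 1) (some false, 0) .D .A,
  .mk (some false) (some true) (some true, 1) (some true, 0) .ACC .N,
  .mk (some false) (some true) (some true, 1) (some true, 1) .D .N,
  .mk (some false) (some true) (some true, 1) (none, 0) .ACC .A,
  .mk (some false) (some true) (some true, 2) (some false, 0) .ACC .A,
  .mk (some false) (some true) (some true, 2) (some false, 0) .D .A,
  .mk (some false) (some true) (some true, 2) (some false, 1) .ACC .A,
  .mk (some false) (some true) (some true, 2) (some false, 1) .D .A,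
  .mk (some false) (some true) (some true, 2) (some false, 2) .ACC .A
]

def GOOD2 : List St := [
  .mk (some false) (some true) (some true, 2) (some false, 2) .D .A,
  .mk (some false) (some true) (some true, 2) (some true, 0) .ACC .A,
  .mk (some false) (some true) (some true, 2) (some true, 0) .ACC .N,
  .mk (some false) (some true) (some true, 2) (some true, 0) .D .A,
  .mk (some false) (some true) (some true, 2) (some true, 0) .D .N,
  .mk (some false) (some true) (some true, 2) (some true, 1) .ACC .A,
  .mk (some false) (some true) (some true, 2) (some true, 1) .ACC .N,
  .mk (some false) (some true) (some true, 2) (some true, 1) .D .A,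
  .mk (some false) (some true) (some true, 2) (some true, 1) .D .N,
  .mk (some false) (some true) (some true, 2) (some true, 2) .ACC .A,
  .mk (some false) (some true) (some true, 2) (some true, 2) .ACC .N,
  .mk (some false) (some true) (some true, 2) (some true, 2) .D .A,
  .mk (some false) (some true) (some true, 2) (some true, 2) .D .N,
  .mk (some false) (some true) (some true, 2) (none, 0) .ACC .A,
  .mk (none) (some false) (none, 0) (none, 0) .E .N
]

def GOOD3 : List St := [
  .mk (none) (none) (none, 0) (none, 0) .S .N,
  .mk (none) (some true) (some true, 0) (none, 0) .P1 .N,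
  .mk (some true) (some false) (some false, 0) (some false, 0) .D .N,
  .mk (some true) (some false) (some false, 0) (none, 0) .E .N,
  .mk (some true) (some false) (some false, 1) (some false, 0) .ACC .N,
  .mk (some true) (some false) (some false, 1) (some false, 1) .D .N,
  .mk (some true) (some false) (some false, 1) (some true, 0) .D .B,
  .mk (some true) (some false) (some false, 1) (none, 0) .ACC .B,
  .mk (some true) (some false) (some false, 2) (some false, 0) .ACC .B,
  .mk (some true) (some false) (some false, 2) (some false, 0) .ACC .N,
  .mk (some true) (some false) (some false, 2) (some false, 0) .D .B,
  .mk (some true) (some false) (some false, 2) (some false, 0) .D .N,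
  .mk (some true) (some false) (some false, 2) (some false, 1) .ACC .B,
  .mk (some true) (some false) (some false, 2) (some false, 1) .ACC .N,
  .mk (some true) (some false) (some false, 2) (some false, 1) .D .B
]

def GOOD4 : List St := [
  .mk (some true) (some false) (some false, 2) (some false, 1) .D .N,
  .mk (some true) (some false) (some false, 2) (some false, 2) .ACC .B,
  .mk (some true) (some false) (some false, 2) (some false, 2) .ACC .N,
  .mk (some true) (some false) (some false, 2) (some false, 2) .D .B,
  .mk (some true) (some false) (some false, 2) (some false, 2) .D .N,
  .mk (some true) (some false) (some false, 2) (some true, 0) .ACC .B,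
  .mk (some true) (some false) (some false, 2) (some true, 0) .D .B,
  .mk (some true) (some false) (some false, 2) (some true, 1) .ACC .B,
  .mk (some true) (some false) (some false, 2) (some true, 1) .D .B,
  .mk (some true) (some false) (some false, 2) (some true, 2) .ACC .B,
  .mk (some true) (some false) (some false, 2) (some true, 2) .D .B,
  .mk (some true) (some false) (some false, 2) (none, 0) .ACC .B,
  .mk (some true) (some true) (some true, 1) (some false, 0) .D .A,
  .mk (some true) (some true) (some true, 1) (none, 0) .ACC .A,
  .mk (some true) (some true) (some true, 2) (some false, 0) .ACC .A
]

def GOOD5 : List St := [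
  .mk (some true) (some true) (some true, 2) (some false, 0) .D .A,
  .mk (some true) (some true) (some true, 2) (some false, 1) .ACC .A,
  .mk (some true) (some true) (some true, 2) (some false, 1) .D .A,
  .mk (some true) (some true) (some true, 2) (some false, 2) .ACC .A,
  .mk (some true) (some true) (some true, 2) (some false, 2) .D .A,
  .mk (some true) (some true) (some true, 2) (some true, 0) .ACC .A,
  .mk (some true) (some true) (some true, 2) (some true, 0) .D .A,
  .mk (some true) (some true) (some true, 2) (some true, 1) .ACC .A,
  .mk (some true) (some true) (some true, 2) (some true, 1) .D .A,
  .mk (some true) (some true) (some true, 2) (some true, 2) .ACC .A,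
  .mk (some true) (some true) (some true, 2) (some true, 2) .D .A,
  .mk (some true) (some true) (some true, 2) (none, 0) .ACC .A
]

def GOOD : List St := GOOD0 ++ GOOD1 ++ GOOD2 ++ GOOD3 ++ GOOD4 ++ GOOD5

lemma good_init : initSt ∈ GOOD := by decide

lemma good_closed : ∀ s ∈ GOOD, stepSt s false ∈ GOOD ∧ stepSt s true ∈ GOOD := by decide

lemma scan_good (w : List Bool) : scanSt w ∈ GOOD := by
  induction w using List.reverseRecOn with
  | nil => exact good_init
  | append_singleton w x ih =>
    rw [scanSt_concat]
    cases x
    · exact (good_closed _ ih).1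
    · exact (good_closed _ ih).2

lemma key : ∀ s ∈ GOOD, s.wk.2 = 1 → ¬ s.lu = LU.ACC → s.ru = RU.N → s.ik.2 = 1 := by
  decide

end Aux7

section Final

lemma preserve (w : List Bool) (h1 : kinkCount w = 1) (hL : ¬ leftUnstable w)
    (hR : ¬ rightUnstable w) : kinkCount (f18W w) = 1 := by
  obtain ⟨-, -, hwk, hik, -, -, -, hACC, hA, hB⟩ := OK_scan w
  have hg := scan_good w
  have e1 : (scanSt w).wk.2 = 1 := by rw [hwk]; simp [kref, h1]
  have e2 : ¬ (scanSt w).lu = LU.ACC := fun hc => hL (hACC hc)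
  have e3 : (scanSt w).ru = RU.N := by
    cases hru : (scanSt w).ru
    · rfl
    · obtain ⟨s', n, hw⟩ := hA hru
      exact absurd ⟨[], s', n, Or.inl rfl, by rw [hw]; simp⟩ hR
    · obtain ⟨s', n, hw⟩ := hB hru
      exact absurd ⟨[false], s', n, Or.inr rfl, by rw [hw]⟩ hR
  have hkey := key (scanSt w) hg e1 e2 e3
  rw [hik] at hkey
  have h2 : min 2 (kinkCount (f18W w)) = 1 := hkey
  omega

lemma kinkCount_one_exists (w : List Bool) (h : kinkCount w = 1) :
    ∃ i k : ℕ, i + 2 * k + 2 ≤ w.length ∧ w.getD i false = true ∧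
      w.getD (i + (2 * k + 1)) false = true ∧
      ∀ j : ℕ, 0 < j → j < 2 * k + 1 → w.getD (i + j) false = false := by
  rw [kinkCount_def] at h
  obtain ⟨i, hi⟩ := Set.nonempty_of_ncard_ne_zero (s := kset w) (by omega)
  obtain ⟨k, hk⟩ := (kinkAt_iff w i).1 hi
  exact ⟨i, k, hk⟩

lemma two_le_length (w : List Bool) (h : kinkCount w = 1) : 2 ≤ w.length := by
  obtain ⟨i, k, hle, -⟩ := kinkCount_one_exists w h
  omega

lemma len_two_unstable (w : List Bool) (h : kinkCount w = 1) (hl : w.length = 2) :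
    leftUnstable w := by
  obtain ⟨i, k, hle, h0, h1, -⟩ := kinkCount_one_exists w h
  have hi : i = 0 ∧ k = 0 := by omega
  obtain ⟨rfl, rfl⟩ := hi
  obtain ⟨a, b, rfl⟩ := List.length_eq_two.1 hl
  simp only [List.getD_cons_zero] at h0
  simp only [Nat.zero_add] at h1
  have hb : b = true := by simpa using h1
  refine ⟨[], [], 0, Or.inl rfl, ?_⟩
  rw [h0, hb]
  simp

lemma main_aux : ∀ N : ℕ, ∀ w : List Bool, w.length ≤ N → kinkCount w = 1 →
    ∃ n : ℕ, leftUnstable (f18W^[n] w) ∨ rightUnstable (f18W^[n] w) := by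
  intro N
  induction N with
  | zero =>
    intro w hw h1
    have := two_le_length w h1
    omega
  | succ N ih =>
    intro w hw h1
    by_cases hL : leftUnstable w
    · exact ⟨0, Or.inl (by simpa using hL)⟩
    by_cases hR : rightUnstable w
    · exact ⟨0, Or.inr (by simpa using hR)⟩
    have hlen2 := two_le_length w h1
    rcases eq_or_lt_of_le hlen2 with heq | hlt
    · exact absurd (len_two_unstable w h1 heq.symm) hL
    · obtain ⟨n, hn⟩ := ih (f18W w) (by rw [f18W_length]; omega) (preserve w h1 hL hR)
      exact ⟨n + 1, by rw [Function.iterate_succ_apply]; exact hn⟩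

end Final

/-- Every one-kink word eventually becomes left or right unstable. -/
theorem one_kink_eventually_unstable (w : List Bool) (h : kinkCount w = 1) :
    ∃ n : ℕ, leftUnstable (f18W^[n] w) ∨ rightUnstable (f18W^[n] w) :=
  main_aux w.length w le_rfl h
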